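/- Let T be a finite NW-deterministic tile set with extended Mealy automaton 𝒜'_T (with sink state c outputting ⊥ constantly). Then there exists a positive integer n with σ_⊥^n = σ_c (as maps on Σ^ω) if and only if ℤ² has no valid Wang tiling by T. -/

import Mathlib

/-- A Mealy automaton with state set `A` and alphabet `X`:
a transition map `δ : A × X → A` and an output map `σ : A × X → X`. -/
structure Mealy (A X : Type*) where
  δ : A → X → A
  σ : A → X → X

namespace Mealy

variable {A X : Type*} (M : Mealy A X)

/-- The state reached from state `a` after reading the finite word `u`. -/
def stA : A → List X → A
  | a, [] => a
  | a, x :: u => stA (M.δ a x) u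

/-- The output word produced by the single state `a` on the finite input word `u`. -/
def outA : A → List X → List X
  | _, [] => []
  | a, x :: u => M.σ a x :: outA (M.δ a x) u

/-- The extended output map: the action `σ_as` of a state word `as` on a finite word. -/
def outW (as : List A) (u : List X) : List X :=
  as.foldl (fun w b => M.outA b w) u

/-- The extended transition map: `δ_u` applied to a state word. -/
def stW : List A → List X → List A
  | [], _ => []
  | a :: as, u => M.stA a u :: stW as (M.outA a u)

/-- The action of a single state `a` on an infinite word. -/
def outInf (a : A) (w : ℕ → X) : ℕ → X :=
  fun n => M.σ (M.stA a (List.ofFn fun i : Fin n => w i)) (w n)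

/-- The action `σ_as` of a state word on an infinite word. -/
def outWInf (as : List A) (w : ℕ → X) : ℕ → X :=
  as.foldl (fun v b => M.outInf b v) w

/-- The semigroup generated by the Mealy automaton, as the set of all
transformations of infinite words given by nonempty state words. -/
def genSet : Set ((ℕ → X) → (ℕ → X)) :=
  {f | ∃ as : List A, as ≠ [] ∧ f = M.outWInf as}

end Mealy

/-- Concatenation of a finite word with an infinite word. -/
def listApp {X : Type*} (p : List X) (q : ℕ → X) : ℕ → X :=
  fun n => if h : n < p.length then p.get ⟨n, h⟩ else q (n - p.length)

/-- A tile set is NW-deterministic if each tile is determined by its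
north and west colors. -/
def NWDet {T C : Type*} (N _S _E W : T → C) : Prop :=
  ∀ s t : T, N s = N t → W s = W t → s = t

open Classical in
/-- The Mealy automaton `𝒜_T` of a tile set: states and letters are tiles
together with a fresh symbol `⊥` (here `none`); the transition is the reset
`δ(x,y) = y`; the output `σ(s,t)` is the unique tile `r` with `r_N = t_S`
and `r_W = s_E` if it exists, and `⊥` otherwise. -/
noncomputable def tileM {T C : Type*} (N S E W : T → C) :
    Mealy (Option T) (Option T) where
  δ := fun _ y => y
  σ := fun a x =>
    match a, x with
    | some s, some t =>
        if h : ∃ r : T, N r = S t ∧ W r = E s then some h.choose else none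
    | _, _ => none

/-- A valid Wang tiling of the plane `ℤ²`. -/
def ValidZ2 {T C : Type*} (N S E W : T → C) (t : ℤ × ℤ → T) : Prop :=
  ∀ x y : ℤ, N (t (x, y)) = S (t (x, y + 1)) ∧ E (t (x, y)) = W (t (x + 1, y))

/-- A valid Wang tiling of the square `{0, 1, …, n}²`. -/
def ValidSquare {T C : Type*} (N S E W : T → C) (n : ℕ) (t : ℕ → ℕ → T) : Prop :=
  (∀ x y : ℕ, x ≤ n → y < n → N (t x y) = S (t x (y + 1))) ∧
  (∀ x y : ℕ, x < n → y ≤ n → E (t x y) = W (t (x + 1) y))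

/-- The extended Mealy automaton `𝒜'_T`: the automaton `𝒜_T` together with an
additional sink state `c` (here `Sum.inr ()`) with `σ(c,x) = ⊥` and
`δ(c,x) = c` for all letters `x`. -/
noncomputable def tileM' {T C : Type*} (N S E W : T → C) :
    Mealy (Option T ⊕ Unit) (Option T) where
  δ := fun a y =>
    match a with
    | Sum.inl _ => Sum.inl y
    | Sum.inr _ => Sum.inr ()
  σ := fun a x =>
    match a with
    | Sum.inl s => (tileM N S E W).σ s x
    | Sum.inr _ => none
section Aux

variable {T C : Type*} (N S E W : T → C)

open Classical in
lemma tileM_sigma_some (s t : T) :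
    (tileM N S E W).σ (some s) (some t) =
      if h : ∃ r : T, N r = S t ∧ W r = E s then some h.choose else none := rfl

lemma tileM_sigma_none_left (x : Option T) :
    (tileM N S E W).σ none x = none := by cases x <;> rfl

lemma tileM_sigma_none_right (s : Option T) :
    (tileM N S E W).σ s none = none := by cases s <;> rfl

lemma tileM_sigma_eq_some {a x : Option T} {r : T}
    (h : (tileM N S E W).σ a x = some r) :
    ∃ s t, a = some s ∧ x = some t ∧ N r = S t ∧ W r = E s := by
  match a, x with
  | none, x => rw [tileM_sigma_none_left] at h; exact absurd h (by simp)
  | some s, none => rw [tileM_sigma_none_right] at h; exact absurd h (by simp)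
  | some s, some t =>
    rw [tileM_sigma_some] at h
    split at h
    · next hex =>
      obtain rfl : hex.choose = r := Option.some.inj h
      exact ⟨s, t, rfl, rfl, hex.choose_spec.1, hex.choose_spec.2⟩
    · exact absurd h (by simp)

lemma tileM_sigma_spec (hNW : NWDet N S E W) {s t r : T}
    (h1 : N r = S t) (h2 : W r = E s) :
    (tileM N S E W).σ (some s) (some t) = some r := by
  have hc : ∃ r : T, N r = S t ∧ W r = E s := ⟨r, h1, h2⟩
  rw [tileM_sigma_some, dif_pos hc]
  exact congrArg some
    (hNW hc.choose r (hc.choose_spec.1.trans h1.symm) (hc.choose_spec.2.trans h2.symm))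

lemma stA_inl (u : List (Option T)) (x : Option T) (a : Option T) :
    (tileM' N S E W).stA (Sum.inl a) (u ++ [x]) = Sum.inl x := by
  induction u generalizing a with
  | nil => simp [Mealy.stA, tileM']
  | cons y u ih => simpa [Mealy.stA, tileM'] using ih y

lemma stA_inr (u : List (Option T)) :
    (tileM' N S E W).stA (Sum.inr ()) u = Sum.inr () := by
  induction u with
  | nil => rfl
  | cons y u ih => simpa [Mealy.stA, tileM'] using ih

lemma outInf_inr (w : ℕ → Option T) (n : ℕ) :
    (tileM' N S E W).outInf (Sum.inr ()) w n = none := by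
  show (tileM' N S E W).σ ((tileM' N S E W).stA (Sum.inr ()) _) _ = none
  rw [stA_inr]
  rfl

lemma F_zero (w : ℕ → Option T) :
    (tileM' N S E W).outInf (Sum.inl none) w 0 = none := by
  show (tileM' N S E W).σ ((tileM' N S E W).stA (Sum.inl none) _) _ = none
  have : (List.ofFn fun i : Fin 0 => w i) = [] := by simp
  rw [this]
  show (tileM N S E W).σ none (w 0) = none
  exact tileM_sigma_none_left N S E W _

lemma F_succ (w : ℕ → Option T) (n : ℕ) :
    (tileM' N S E W).outInf (Sum.inl none) w (n + 1) =
      (tileM N S E W).σ (w n) (w (n + 1)) := by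
  show (tileM' N S E W).σ ((tileM' N S E W).stA (Sum.inl none) _) _ = _
  rw [List.ofFn_succ', List.concat_eq_append, stA_inl]
  simp only [Fin.val_last]
  rfl

end Aux
noncomputable def FF {T C : Type*} (N S E W : T → C) : (ℕ → Option T) → (ℕ → Option T) :=
  (tileM' N S E W).outInf (Sum.inl none)

section Cone

variable {T C : Type*} (N S E W : T → C)

lemma FF_zero (w : ℕ → Option T) : FF N S E W w 0 = none := F_zero N S E W w

lemma FF_succ (w : ℕ → Option T) (n : ℕ) :
    FF N S E W w (n + 1) = (tileM N S E W).σ (w n) (w (n + 1)) := F_succ N S E W w n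


lemma step_some {m : ℕ} {w : ℕ → Option T} {q : ℕ}
    (h : ((FF N S E W)^[m + 1] w) (q + 1) ≠ none) :
    ((FF N S E W)^[m] w) q ≠ none ∧ ((FF N S E W)^[m] w) (q + 1) ≠ none := by
  rw [Function.iterate_succ_apply', FF_succ] at h
  constructor
  · intro hq; rw [hq, tileM_sigma_none_left] at h; exact h rfl
  · intro hq; rw [hq, tileM_sigma_none_right] at h; exact h rfl

lemma claimE : ∀ (m : ℕ) (w : ℕ → Option T) (p : ℕ), ((FF N S E W)^[m] w) p ≠ none → m ≤ p := by
  intro m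
  induction m with
  | zero => intro w p _; exact Nat.zero_le _
  | succ m ih =>
    intro w p h
    cases p with
    | zero =>
      rw [Function.iterate_succ_apply', FF_zero] at h
      exact absurd rfl h
    | succ q =>
      have := (step_some N S E W h).1
      have := ih w q this
      omega

lemma claimD : ∀ (m : ℕ) (w : ℕ → Option T) (n : ℕ),
    ((FF N S E W)^[m] w) (n + m) ≠ none →
    ∀ l p, l ≤ m → n + l ≤ p → p ≤ n + m → ((FF N S E W)^[l] w) p ≠ none := by
  intro m
  induction m with
  | zero =>
    intro w n h l p hl h1 h2
    obtain rfl : l = 0 := by omega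
    obtain rfl : p = n := by omega
    simpa using h
  | succ m ih =>
    intro w n h l p hl h1 h2
    have hA : ((FF N S E W)^[m] w) (n + m) ≠ none := by
      have := step_some N S E W (m := m) (q := n + m) (by
        have : n + (m + 1) = n + m + 1 := by omega
        rwa [this] at h)
      exact this.1
    have hB : ((FF N S E W)^[m] w) ((n + 1) + m) ≠ none := by
      have := step_some N S E W (m := m) (q := n + m) (by
        have : n + (m + 1) = n + m + 1 := by omega
        rwa [this] at h)
      have h2 := this.2
      have e : n + m + 1 = (n + 1) + m := by omega
      rwa [e] at h2
    rcases Nat.lt_or_ge l (m + 1) with hlm | hlm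
    · have hlm' : l ≤ m := by omega
      rcases le_or_gt p (n + m) with hp | hp
      · exact ih w n hA l p hlm' h1 hp
      · have hp' : p = n + m + 1 := by omega
        have : (n + 1) + l ≤ p := by omega
        -- need n+1+l ≤ n+m+1 i.e. l ≤ m ✓
        exact ih w (n + 1) hB l p hlm' (by omega) (by omega)
    · obtain rfl : l = m + 1 := by omega
      obtain rfl : p = n + (m + 1) := by omega
      exact h

lemma extract_square (hNW : NWDet N S E W) (k : ℕ) (w : ℕ → Option T) (n : ℕ) (r : T)
    (h : ((FF N S E W)^[2 * k] w) n = some r) :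
    ∃ t : ℕ → ℕ → T, ValidSquare N S E W k t := by
  have hne : ((FF N S E W)^[2 * k] w) n ≠ none := by rw [h]; simp
  have hge : 2 * k ≤ n := claimE N S E W _ w n hne
  obtain ⟨b, rfl⟩ : ∃ b, n = b + 2 * k := ⟨n - 2 * k, by omega⟩
  have H : ∀ l p, l ≤ 2 * k → b + l ≤ p → p ≤ b + 2 * k → ((FF N S E W)^[l] w) p ≠ none :=
    claimD N S E W (2 * k) w b hne
  set t : ℕ → ℕ → T := fun x y => (((FF N S E W)^[k + x - y] w) (b + k + x)).getD r with ht
  have key : ∀ x y, x ≤ k → y ≤ k → ((FF N S E W)^[k + x - y] w) (b + k + x) = some (t x y) := by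
    intro x y hx hy
    have h1 : ((FF N S E W)^[k + x - y] w) (b + k + x) ≠ none :=
      H (k + x - y) (b + k + x) (by omega) (by omega) (by omega)
    rcases Option.eq_none_or_eq_some (((FF N S E W)^[k + x - y] w) (b + k + x)) with h2 | ⟨a, h2⟩
    · exact absurd h2 h1
    · rw [h2]; rw [ht]; simp [h2]
  refine ⟨t, ?_, ?_⟩
  · -- north-south
    intro x y hx hy
    have hk1 : 1 ≤ k := by omega
    have el : k + x - y = (k + x - (y + 1)) + 1 := by omega
    have hxy := key x y hx (by omega)
    rw [el] at hxy
    obtain ⟨q, eq⟩ : ∃ q, b + k + x = q + 1 := ⟨b + k + x - 1, by omega⟩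
    rw [eq, Function.iterate_succ_apply', FF_succ] at hxy
    obtain ⟨s', t', hs', ht', hN, hW⟩ := tileM_sigma_eq_some N S E W hxy
    have hup : ((FF N S E W)^[k + x - (y + 1)] w) (q + 1) = some (t x (y + 1)) := by
      rw [← eq]; exact key x (y + 1) hx hy
    rw [ht'] at hup
    rw [hN, Option.some.inj hup]
  · -- east-west
    intro x y hx hy
    have el : k + (x + 1) - y = (k + x - y) + 1 := by omega
    have hxy := key (x + 1) y hx hy
    rw [el] at hxy
    have eq : b + k + (x + 1) = (b + k + x) + 1 := by omega
    rw [eq, Function.iterate_succ_apply', FF_succ] at hxy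
    obtain ⟨s', t', hs', ht', hN, hW⟩ := tileM_sigma_eq_some N S E W hxy
    have hleft : ((FF N S E W)^[k + x - y] w) (b + k + x) = some (t x y) := key x y (by omega) hy
    rw [hs'] at hleft
    rw [hW, Option.some.inj hleft]

end Cone
section Compact

lemma ultra_exists_const {T : Type*} [Fintype T] (u : Ultrafilter ℕ) (f : ℕ → T) :
    ∃ a : T, {n | f n = a} ∈ u := by
  have hU : (⋃ a ∈ (Set.univ : Set T), {n | f n = a}) ∈ u := by
    have : (⋃ a ∈ (Set.univ : Set T), {n | f n = a}) = Set.univ := by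
      ext n; simp
    rw [this]; exact Filter.univ_mem
  rcases (Ultrafilter.finite_biUnion_mem_iff Set.finite_univ).mp hU with ⟨a, _, ha⟩
  exact ⟨a, ha⟩

lemma squares_to_plane {T C : Type*} [Fintype T] (N S E W : T → C)
    (hk : ∀ k : ℕ, ∃ t, ValidSquare N S E W k t) :
    ∃ t : ℤ × ℤ → T, ValidZ2 N S E W t := by
  choose sq hsq using hk
  set g : ℕ → ℤ × ℤ → T := fun n p => sq (2 * n) (p.1 + n).toNat (p.2 + n).toNat with hg
  set u : Ultrafilter ℕ := Filter.hyperfilter ℕ with hu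
  have hexists : ∀ p : ℤ × ℤ, ∃ a : T, {n | g n p = a} ∈ u := fun p =>
    ultra_exists_const u (fun n => g n p)
  choose t ht using hexists
  refine ⟨t, ?_⟩
  intro x y
  set K : ℕ := x.natAbs + y.natAbs + 1 with hK
  have hcof : {n | K < n} ∈ u := by
    have : {n | K < n} = (Set.Iic K)ᶜ := by ext n; simp only [Set.mem_setOf_eq, Set.mem_compl_iff, Set.mem_Iic]; omega
    rw [this]
    exact Filter.compl_mem_hyperfilter_of_finite (Set.finite_Iic K)
  have hmem : ({n | K < n} ∩ ({n | g n (x, y) = t (x, y)} ∩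
      ({n | g n (x, y + 1) = t (x, y + 1)} ∩
        ({n | g n (x + 1, y) = t (x + 1, y)})))) ∈ u :=
    Filter.inter_mem hcof (Filter.inter_mem (ht _) (Filter.inter_mem (ht _) (ht _)))
  obtain ⟨n, hn1, hn2, hn3, hn4⟩ := Filter.nonempty_of_mem hmem
  simp only [Set.mem_setOf_eq] at hn1 hn2 hn3 hn4
  have hx : x.natAbs ≤ K ∧ y.natAbs ≤ K := by omega
  have hxy := hsq (2 * n)
  constructor
  · rw [← hn2, ← hn3]
    have e1 : ((y + 1) + (n : ℤ)).toNat = (y + n).toNat + 1 := by omega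
    simp only [hg]
    rw [e1]
    exact hxy.1 _ _ (by omega) (by omega)
  · rw [← hn2, ← hn4]
    have e2 : ((x + 1) + (n : ℤ)).toNat = (x + n).toNat + 1 := by omega
    simp only [hg]
    rw [e2]
    exact hxy.2 _ _ (by omega) (by omega)

end Compact
section Forward

variable {T C : Type*} (N S E W : T → C)

lemma diag_lemma (hNW : NWDet N S E W) (f : ℤ × ℤ → T) (hf : ValidZ2 N S E W f) :
    ∀ m n : ℕ, (FF N S E W)^[m] (fun j => some (f (j, j))) n =
      if n < m then none else some (f ((n : ℤ), (n : ℤ) - (m : ℤ))) := by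
  intro m
  induction m with
  | zero =>
    intro n
    simp
  | succ m ih =>
    intro n
    rw [Function.iterate_succ_apply']
    cases n with
    | zero => rw [FF_zero, if_pos (by omega)]
    | succ q =>
      rw [FF_succ, ih q, ih (q + 1)]
      by_cases hq : q < m
      · rw [if_pos hq, tileM_sigma_none_left, if_pos (by omega)]
      · rw [if_neg hq, if_neg (by omega), if_neg (by omega)]
        have e1 : ((q + 1 : ℕ) : ℤ) = (q : ℤ) + 1 := by push_cast; ring
        have e2 : ((m + 1 : ℕ) : ℤ) = (m : ℤ) + 1 := by push_cast; ring
        rw [e1, e2]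
        have e3 : (q : ℤ) + 1 - ((m : ℤ) + 1) = (q : ℤ) - m := by ring
        rw [e3]
        apply tileM_sigma_spec N S E W hNW
        · have h1 := (hf ((q : ℤ) + 1) ((q : ℤ) - m)).1
          have e4 : (q : ℤ) - m + 1 = (q : ℤ) + 1 - m := by ring
          rwa [e4] at h1
        · exact ((hf (q : ℤ) ((q : ℤ) - m)).2).symm

end Forward

/-- for the extended automaton `𝒜'_T` of a finite
NW-deterministic tile set, there is a positive integer `n` with
`σ_⊥^n = σ_c` (as maps on `Σ^ω`) if and only if `ℤ²` has no valid
Wang tiling by `T`. -/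
theorem stmt_14 {T C : Type*} [Fintype T] (N S E W : T → C)
    (hNW : NWDet N S E W) :
    (∃ n : ℕ, 0 < n ∧
        ((tileM' N S E W).outInf (Sum.inl none))^[n] =
          (tileM' N S E W).outInf (Sum.inr ())) ↔
      ¬∃ t : ℤ × ℤ → T, ValidZ2 N S E W t := by
  constructor
  · rintro ⟨n, hn, heq⟩ ⟨f, hf⟩
    have hd := diag_lemma N S E W hNW f hf n n
    rw [if_neg (by omega)] at hd
    have : (FF N S E W)^[n] (fun j => some (f (j, j))) n = none := by
      show ((tileM' N S E W).outInf (Sum.inl none))^[n] (fun j => some (f (j, j))) n = none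
      rw [heq]
      exact outInf_inr N S E W _ n
    rw [hd] at this
    exact Option.some_ne_none _ this
  · intro hno
    have hsq : ∃ k : ℕ, ¬∃ t, ValidSquare N S E W k t := by
      by_contra hall
      push_neg at hall
      exact hno (squares_to_plane N S E W hall)
    obtain ⟨k, hk⟩ := hsq
    refine ⟨2 * (k + 1), by omega, ?_⟩
    funext w
    funext n
    show (FF N S E W)^[2 * (k + 1)] w n = _
    rw [outInf_inr]
    rcases Option.eq_none_or_eq_some ((FF N S E W)^[2 * (k + 1)] w n) with h | ⟨r, h⟩
    · exact h
    · exfalso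
      obtain ⟨t, ht⟩ := extract_square N S E W hNW (k + 1) w n r h
      exact hk ⟨t, fun x y hx hy => ht.1 x y (by omega) (by omega),
        fun x y hx hy => ht.2 x y (by omega) (by omega)⟩
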